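/- Fix ρ with 0 < |ρ| < 1, c > 0, and γ ∈ ℝ. The function h_γ(u) = Δ(γ, c)·φ(u + ργ/√(1−ρ²)) + (1 − Δ((γ + ρu)/√(1−ρ²), c/√(1−ρ²)))·φ(u), where Δ(a,b) = Φ(a+b) − Φ(a−b) and φ, Φ are the standard normal density and cdf, is a probability density on ℝ, i.e., h_γ is nonnegative and integrates to 1. -/

import Mathlib

open MeasureTheory Real Set

noncomputable def stdPhi (u : ℝ) : ℝ := (Real.sqrt (2 * Real.pi))⁻¹ * Real.exp (-(u ^ 2) / 2)

noncomputable def stdCdf (x : ℝ) : ℝ := ∫ u in Iic x, stdPhi u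

noncomputable def Del (a b : ℝ) : ℝ := stdCdf (a + b) - stdCdf (a - b)

lemma stdPhi_nonneg (u : ℝ) : 0 ≤ stdPhi u :=
  mul_nonneg (inv_nonneg.2 (Real.sqrt_nonneg _)) (Real.exp_pos _).le

lemma stdPhi_eq (u : ℝ) :
    stdPhi u = (Real.sqrt (2 * Real.pi))⁻¹ * Real.exp (-(1/2 : ℝ) * u ^ 2) := by
  rw [stdPhi]; ring_nf

lemma continuous_stdPhi : Continuous stdPhi := by
  unfold stdPhi; continuity

lemma stdPhi_integrable : Integrable stdPhi := by
  have h := (integrable_exp_neg_mul_sq (b := 1/2) (by norm_num)).const_mul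
    ((Real.sqrt (2 * Real.pi))⁻¹)
  exact h.congr (Filter.Eventually.of_forall fun u => (stdPhi_eq u).symm)

lemma stdPhi_integral : ∫ u, stdPhi u = 1 := by
  simp_rw [stdPhi_eq]
  rw [MeasureTheory.integral_const_mul, integral_gaussian]
  rw [show (Real.pi / (1/2)) = 2 * Real.pi by ring]
  exact inv_mul_cancel₀ (by positivity)

lemma stdPhi_le (u : ℝ) : stdPhi u ≤ (Real.sqrt (2 * Real.pi))⁻¹ := by
  rw [stdPhi]
  exact mul_le_of_le_one_right (by positivity)
    (Real.exp_le_one_iff.2 (by nlinarith [sq_nonneg u]))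

lemma stdCdf_nonneg (x : ℝ) : 0 ≤ stdCdf x :=
  integral_nonneg fun u => stdPhi_nonneg u

lemma stdCdf_le_one (x : ℝ) : stdCdf x ≤ 1 := by
  rw [← stdPhi_integral]
  exact setIntegral_le_integral stdPhi_integrable
    (Filter.Eventually.of_forall fun u => stdPhi_nonneg u)

lemma stdCdf_mono : Monotone stdCdf := fun a b hab =>
  setIntegral_mono_set stdPhi_integrable.integrableOn
    (Filter.Eventually.of_forall fun u => stdPhi_nonneg u)
    (HasSubset.Subset.eventuallyLE (Iic_subset_Iic.2 hab))

lemma stdCdf_measurable : Measurable stdCdf := stdCdf_mono.measurable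

lemma Del_nonneg {a b : ℝ} (hb : 0 ≤ b) : 0 ≤ Del a b :=
  sub_nonneg.2 (stdCdf_mono (by linarith))

lemma Del_le_one (a b : ℝ) : Del a b ≤ 1 := by
  have h1 := stdCdf_le_one (a + b)
  have h2 := stdCdf_nonneg (a - b)
  rw [Del]; linarith

lemma int_phi_shift_scale {s : ℝ} (hs : 0 < s) (a : ℝ) :
    ∫ u, stdPhi ((u + a) / s) = s := by
  have h1 : ∫ u : ℝ, stdPhi ((u + a) / s) = ∫ u : ℝ, stdPhi (u / s) :=
    integral_add_right_eq_self (fun u => stdPhi (u / s)) a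
  rw [h1, Measure.integral_comp_div stdPhi s, abs_of_pos hs, smul_eq_mul, stdPhi_integral,
    mul_one]

lemma cdf_sub {s : ℝ} (hs : 0 < s) (t α : ℝ) :
    ∫ w in Iic α, s⁻¹ * stdPhi ((w + t) / s) = stdCdf ((α + t) / s) := by
  have hs' : s ≠ 0 := hs.ne'
  set F : ℝ → ℝ := Set.indicator (Iic α) (fun w => s⁻¹ * stdPhi ((w + t) / s)) with hF
  have h1 : ∫ w in Iic α, s⁻¹ * stdPhi ((w + t) / s) = ∫ w, F w :=
    (integral_indicator measurableSet_Iic).symm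
  have h2 : ∀ v : ℝ, F (s * v - t)
      = Set.indicator (Iic ((α + t) / s)) (fun v => s⁻¹ * stdPhi v) v := by
    intro v
    by_cases hv : v ≤ (α + t) / s
    · have hmem : s * v - t ≤ α := by
        rw [sub_le_iff_le_add]
        calc s * v ≤ s * ((α + t) / s) := by
              exact mul_le_mul_of_nonneg_left hv hs.le
          _ = α + t := by field_simp
      rw [hF, Set.indicator_of_mem (mem_Iic.2 hmem), Set.indicator_of_mem (mem_Iic.2 hv)]
      congr 1
      rw [sub_add_cancel, mul_div_cancel_left₀ _ hs']
    · have hmem : ¬ (s * v - t ≤ α) := by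
        intro h
        exact hv (by rw [le_div_iff₀ hs] at *; linarith [mul_comm v s])
      rw [hF, Set.indicator_of_notMem (fun h => hmem (mem_Iic.1 h)),
        Set.indicator_of_notMem (fun h => hv (mem_Iic.1 h))]
  have h3 : ∫ x, F (x - t) = ∫ w, F w := by
    simpa [sub_eq_add_neg] using integral_add_right_eq_self F (-t)
  have h4 : ∫ v, F (s * v - t) = |s⁻¹| • ∫ x, F (x - t) :=
    Measure.integral_comp_mul_left (fun x => F (x - t)) s
  have h5 : ∫ v, F (s * v - t) = s⁻¹ * stdCdf ((α + t) / s) := by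
    simp_rw [h2]
    rw [integral_indicator measurableSet_Iic, MeasureTheory.integral_const_mul, stdCdf]
  rw [h1, ← h3]
  rw [h5, abs_of_pos (inv_pos.2 hs), smul_eq_mul] at h4
  have := h4.symm
  field_simp at this ⊢
  linarith [this]

section Key

variable {ρ s : ℝ}

lemma phi_swap (hs2 : s ^ 2 = 1 - ρ ^ 2) (hs : 0 < s) (w u : ℝ) :
    stdPhi ((w + ρ * u) / s) * stdPhi u = stdPhi w * stdPhi ((u + ρ * w) / s) := by
  have hs' : s ≠ 0 := hs.ne'
  have key : ((w + ρ * u) / s) ^ 2 + u ^ 2 = w ^ 2 + ((u + ρ * w) / s) ^ 2 := by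
    field_simp
    nlinarith [hs2]
  have hexp : Real.exp (-(((w + ρ * u) / s) ^ 2) / 2) * Real.exp (-(u ^ 2) / 2)
      = Real.exp (-(w ^ 2) / 2) * Real.exp (-(((u + ρ * w) / s) ^ 2) / 2) := by
    rw [← Real.exp_add, ← Real.exp_add]
    congr 1
    linarith [key]
  simp only [stdPhi]
  linear_combination (Real.sqrt (2 * Real.pi))⁻¹ * (Real.sqrt (2 * Real.pi))⁻¹ * hexp

lemma inner_int (hs2 : s ^ 2 = 1 - ρ ^ 2) (hs : 0 < s) (w : ℝ) :
    ∫ u, s⁻¹ * stdPhi ((w + ρ * u) / s) * stdPhi u = stdPhi w := by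
  have : ∀ u, s⁻¹ * stdPhi ((w + ρ * u) / s) * stdPhi u
      = s⁻¹ * stdPhi w * stdPhi ((u + ρ * w) / s) := by
    intro u
    rw [mul_assoc, phi_swap hs2 hs, mul_assoc]
  simp_rw [this]
  rw [MeasureTheory.integral_const_mul, int_phi_shift_scale hs]
  field_simp

lemma slice_integrable (hs : 0 < s) (w : ℝ) :
    Integrable (fun u => s⁻¹ * stdPhi ((w + ρ * u) / s) * stdPhi u) := by
  apply stdPhi_integrable.bdd_mul (c := s⁻¹ * (Real.sqrt (2 * Real.pi))⁻¹)
  · exact ((continuous_const.mul (continuous_stdPhi.comp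
      ((continuous_const.add (continuous_const.mul continuous_id)).div_const s))).aestronglyMeasurable)
  · refine Filter.Eventually.of_forall fun x => ?_
    rw [norm_mul, norm_inv, Real.norm_eq_abs, Real.norm_eq_abs, abs_of_pos hs,
      abs_of_nonneg (stdPhi_nonneg _)]
    exact mul_le_mul_of_nonneg_left (stdPhi_le _) (by positivity)

lemma prod_integrable (hs2 : s ^ 2 = 1 - ρ ^ 2) (hs : 0 < s) :
    Integrable (Function.uncurry fun u w => s⁻¹ * stdPhi ((w + ρ * u) / s) * stdPhi u)
      ((volume : Measure ℝ).prod volume) := by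
  have hmeas : AEStronglyMeasurable
      (Function.uncurry fun u w => s⁻¹ * stdPhi ((w + ρ * u) / s) * stdPhi u)
      ((volume : Measure ℝ).prod volume) := by
    apply Continuous.aestronglyMeasurable
    apply Continuous.mul
    · exact continuous_const.mul (continuous_stdPhi.comp
        ((continuous_snd.add (continuous_const.mul continuous_fst)).div_const s))
    · exact continuous_stdPhi.comp continuous_fst
  rw [integrable_prod_iff' hmeas]
  constructor
  · exact Filter.Eventually.of_forall fun w => slice_integrable hs w
  · have heq : ∀ w : ℝ, (∫ u, ‖s⁻¹ * stdPhi ((w + ρ * u) / s) * stdPhi u‖) = stdPhi w := by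
      intro w
      rw [← inner_int hs2 hs w]
      congr 1; funext u
      rw [norm_of_nonneg (mul_nonneg (mul_nonneg (inv_nonneg.2 hs.le)
        (stdPhi_nonneg _)) (stdPhi_nonneg _))]
    refine stdPhi_integrable.congr
      (Filter.Eventually.of_forall fun w => ?_)
    simp only [Function.uncurry]
    exact (heq w).symm

lemma key_int (hs2 : s ^ 2 = 1 - ρ ^ 2) (hs : 0 < s) (α : ℝ) :
    ∫ u, stdCdf ((α + ρ * u) / s) * stdPhi u = stdCdf α := by
  have step1 : ∀ u : ℝ, stdCdf ((α + ρ * u) / s) * stdPhi u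
      = ∫ w in Iic α, s⁻¹ * stdPhi ((w + ρ * u) / s) * stdPhi u := by
    intro u
    rw [← cdf_sub hs (ρ * u) α, ← MeasureTheory.integral_mul_const]
  have hprodres : Integrable (Function.uncurry fun u w => s⁻¹ * stdPhi ((w + ρ * u) / s) * stdPhi u)
      ((volume : Measure ℝ).prod (volume.restrict (Iic α))) := by
    rw [show (volume : Measure ℝ).prod (volume.restrict (Iic α))
        = ((volume : Measure ℝ).prod volume).restrict (univ ×ˢ Iic α) by
      rw [← Measure.prod_restrict, Measure.restrict_univ]]
    exact (prod_integrable hs2 hs).restrict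
  calc ∫ u, stdCdf ((α + ρ * u) / s) * stdPhi u
      = ∫ u, ∫ w in Iic α, s⁻¹ * stdPhi ((w + ρ * u) / s) * stdPhi u := by
        exact integral_congr_ae (Filter.Eventually.of_forall step1)
    _ = ∫ w in Iic α, ∫ u, s⁻¹ * stdPhi ((w + ρ * u) / s) * stdPhi u := by
        exact integral_integral_swap hprodres
    _ = ∫ w in Iic α, stdPhi w := by
        exact integral_congr_ae (Filter.Eventually.of_forall fun w => inner_int hs2 hs w)
    _ = stdCdf α := rfl

end Key

noncomputable def pmsDensity (ρ c γ : ℝ) (u : ℝ) : ℝ :=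
  Del γ c * stdPhi (u + ρ * γ / Real.sqrt (1 - ρ ^ 2)) +
    (1 - Del ((γ + ρ * u) / Real.sqrt (1 - ρ ^ 2)) (c / Real.sqrt (1 - ρ ^ 2))) * stdPhi u

theorem stmt_7 (ρ c γ : ℝ) (hρ0 : ρ ≠ 0) (hρ1 : |ρ| < 1) (hc : 0 < c) :
    (∀ u, 0 ≤ pmsDensity ρ c γ u) ∧ (∫ u, pmsDensity ρ c γ u = 1) := by
  have hρsq : ρ ^ 2 < 1 := by
    have h := abs_lt.1 hρ1
    nlinarith [h.1, h.2]
  set s := Real.sqrt (1 - ρ ^ 2) with hsdef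
  have hs2 : s ^ 2 = 1 - ρ ^ 2 := Real.sq_sqrt (by linarith)
  have hs : 0 < s := Real.sqrt_pos.2 (by linarith)
  constructor
  · intro u
    rw [pmsDensity]
    apply add_nonneg
    · exact mul_nonneg (Del_nonneg hc.le) (stdPhi_nonneg _)
    · exact mul_nonneg (sub_nonneg.2 (Del_le_one _ _)) (stdPhi_nonneg _)
  · have hDel : ∀ u : ℝ, Del ((γ + ρ * u) / s) (c / s)
        = stdCdf ((γ + c + ρ * u) / s) - stdCdf ((γ - c + ρ * u) / s) := by
      intro u
      rw [Del, show (γ + ρ * u) / s + c / s = (γ + c + ρ * u) / s by ring,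
        show (γ + ρ * u) / s - c / s = (γ - c + ρ * u) / s by ring]
    have hint1 : Integrable (fun u : ℝ => stdPhi (u + ρ * γ / s)) :=
      ((measurePreserving_add_right volume (ρ * γ / s)).integrable_comp
        stdPhi_integrable.aestronglyMeasurable).mpr stdPhi_integrable
    have hintK : ∀ α : ℝ, Integrable (fun u => stdCdf ((α + ρ * u) / s) * stdPhi u) := by
      intro α
      apply stdPhi_integrable.bdd_mul (c := 1)
      · exact ((stdCdf_measurable.comp
          ((measurable_const.add (measurable_const.mul measurable_id)).div_const s)).aestronglyMeasurable)
      · exact Filter.Eventually.of_forall fun x => by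
          rw [Real.norm_eq_abs, abs_of_nonneg (stdCdf_nonneg _)]
          exact stdCdf_le_one _
    have hpt : (fun u => pmsDensity ρ c γ u) = fun u =>
        Del γ c * stdPhi (u + ρ * γ / s) + stdPhi u
          - stdCdf ((γ + c + ρ * u) / s) * stdPhi u
          + stdCdf ((γ - c + ρ * u) / s) * stdPhi u := by
      funext u
      rw [pmsDensity, ← hsdef, hDel u]
      ring
    have hshift : ∫ u : ℝ, stdPhi (u + ρ * γ / s) = 1 := by
      rw [integral_add_right_eq_self stdPhi, stdPhi_integral]
    have hI1 : Integrable (fun u : ℝ => Del γ c * stdPhi (u + ρ * γ / s)) :=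
      hint1.const_mul _
    have hI2 : Integrable (fun u : ℝ => Del γ c * stdPhi (u + ρ * γ / s) + stdPhi u) :=
      hI1.add stdPhi_integrable
    have hI3 : Integrable (fun u : ℝ => Del γ c * stdPhi (u + ρ * γ / s) + stdPhi u
        - stdCdf ((γ + c + ρ * u) / s) * stdPhi u) := hI2.sub (hintK (γ + c))
    rw [hpt, integral_add hI3 (hintK (γ - c)),
      integral_sub hI2 (hintK (γ + c)),
      integral_add hI1 stdPhi_integrable,
      MeasureTheory.integral_const_mul, hshift, stdPhi_integral,
      key_int hs2 hs (γ + c), key_int hs2 hs (γ - c), Del]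
    ring
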